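/- Let H be a real Hilbert space, let ρ ∈ (0,∞], and let S ⊆ H be a nonempty closed ρ-uniformly prox-regular set. Then S is connected if and only if S is path-connected. -/

import Mathlib

open MeasureTheory Set Metric Filter Topology
open scoped RealInnerProductSpace ENNReal

/-- The proximal normal cone of `S` at `x`: `ζ ∈ N^P(S;x)` iff there are `σ ≥ 0`, `η > 0`
with `⟪ζ, y - x⟫ ≤ σ‖y - x‖²` for all `y ∈ S` with `‖y - x‖ < η`. -/
def ProxNormalCone {H : Type*} [NormedAddCommGroup H] [InnerProductSpace ℝ H]
    (S : Set H) (x : H) : Set H :=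
  {ζ : H | ∃ σ : ℝ, 0 ≤ σ ∧ ∃ η : ℝ, 0 < η ∧
    ∀ y ∈ S, ‖y - x‖ < η → ⟪ζ, y - x⟫ ≤ σ * ‖y - x‖ ^ 2}

/-- `ρ`-uniform prox-regularity, with `ρ ∈ (0,∞]` encoded in `ℝ≥0∞`.
For `ρ = ∞` one has `‖ζ‖ / (2 * ρ.toReal) = ‖ζ‖ / 0 = 0`, recovering the convex inequality. -/
def UniformlyProxRegular {H : Type*} [NormedAddCommGroup H] [InnerProductSpace ℝ H]
    (ρ : ℝ≥0∞) (S : Set H) : Prop :=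
  ∀ x ∈ S, ∀ ζ ∈ ProxNormalCone S x, ∀ x' ∈ S,
    ⟪ζ, x' - x⟫ ≤ ‖ζ‖ / (2 * ρ.toReal) * ‖x' - x‖ ^ 2

/-- Lower semicontinuity of a set-valued map on a set `A`: for every `a ∈ A` and open `U`
meeting `C a`, the set of points of `A` where `C` meets `U` is a neighborhood of `a` in `A`. -/
def LscOn {α β : Type*} [TopologicalSpace α] [TopologicalSpace β]
    (C : α → Set β) (A : Set α) : Prop :=
  ∀ a ∈ A, ∀ U : Set β, IsOpen U → (C a ∩ U).Nonempty →
    {a' | a' ∈ A ∧ (C a' ∩ U).Nonempty} ∈ nhdsWithin a A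

/-- Admissible trajectory for a moving set `C` on `[0,T]`: right-continuous, of bounded
variation, with `x 0 ∈ C 0` and `x t ∈ C t` for all `t ∈ [0,T]`. -/
def AdmissibleTrajectory {E : Type*} [NormedAddCommGroup E]
    (C : ℝ → Set E) (T : ℝ) (x : ℝ → E) : Prop :=
  (∀ t ∈ Icc (0:ℝ) T, ContinuousWithinAt x (Ici t) t) ∧
    BoundedVariationOn x (Icc (0:ℝ) T) ∧ x 0 ∈ C 0 ∧ ∀ t ∈ Icc (0:ℝ) T, x t ∈ C t

/-- The differential measure `dx` is absolutely continuous w.r.t. `ν` with density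
`v ∈ L¹_ν`: `x t = x 0 + ∫_{(0,t]} v dν` for all `t ∈ [0,T]`. -/
def HasDensity {E : Type*} [NormedAddCommGroup E] [NormedSpace ℝ E]
    (T : ℝ) (ν : Measure ℝ) (x v : ℝ → E) : Prop :=
  Integrable v ν ∧ ∀ t ∈ Icc (0:ℝ) T, x t = x 0 + ∫ s in Ioc (0:ℝ) t, v s ∂ν

/-- A (complete) positive Radon measure on `[0,T]`: a finite inner regular Borel measure
carried by `[0,T]`. -/
def IsRadonOn (ν : Measure ℝ) (T : ℝ) : Prop :=
  IsFiniteMeasure ν ∧ ν.InnerRegular ∧ ν ((Icc (0:ℝ) T)ᶜ) = 0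

/-- The bounded selection-extension property (H₃). -/
def SelectionExtension {E : Type*} [NormedAddCommGroup E] (C : ℝ → Set E) (T : ℝ) : Prop :=
  ∀ x : ℝ → E, (∃ M : ℝ, ∀ t ∈ Icc (0:ℝ) T, ‖x t‖ ≤ M) →
    (∀ t ∈ Icc (0:ℝ) T, x t ∈ C t) → ∀ η : ℝ, 0 < η →
    ∃ R : ℝ, 0 < R ∧
      ∀ K : Set ℝ, IsCompact K → K ⊆ Icc (0:ℝ) T →
        ∀ y : ℝ → E, ContinuousOn y K → (∀ t ∈ K, y t ∈ C t) →
          (∀ t ∈ K, ‖y t - x t‖ ≤ η) →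
          ∃ ybar : ℝ → E, ContinuousOn ybar (Icc (0:ℝ) T) ∧
            (∀ t ∈ Icc (0:ℝ) T, ybar t ∈ C t) ∧ (∀ t ∈ K, ybar t = y t) ∧
            ∀ t ∈ Icc (0:ℝ) T, ‖ybar t‖ ≤ R

/-- Hypothesis (H₁): each `C t` is nonempty, closed, connected and `ρ`-uniformly prox-regular. -/
def HypH1 {H : Type*} [NormedAddCommGroup H] [InnerProductSpace ℝ H]
    (ρ : ℝ≥0∞) (C : ℝ → Set H) (T : ℝ) : Prop :=
  ∀ t ∈ Icc (0:ℝ) T, (C t).Nonempty ∧ IsClosed (C t) ∧ IsConnected (C t) ∧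
    UniformlyProxRegular ρ (C t)


section ProxHelpers

set_option maxHeartbeats 1000000

variable {H : Type*} [NormedAddCommGroup H] [InnerProductSpace ℝ H]

/-- Algebraic identity for combining two quadratics in a Hilbert space. -/
lemma quad_diff (a b : ℝ) (m p q w₁ w₂ : H) (hm : (a + b) • m = a • p + b • q) :
    (a + b) * ‖w₁ - m‖ ^ 2 + a * ‖w₂ - p‖ ^ 2 + b * ‖w₂ - q‖ ^ 2 =
      (a + b) * ‖w₂ - m‖ ^ 2 + a * ‖w₁ - p‖ ^ 2 + b * ‖w₁ - q‖ ^ 2 := by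
  have e : ∀ x w : H, ‖w - x‖ ^ 2 = ‖w‖ ^ 2 - 2 * ⟪w, x⟫ + ‖x‖ ^ 2 := by
    intro x w
    rw [norm_sub_sq_real]
  have h' : ∀ d : H, (a + b) * ⟪d, m⟫ = a * ⟪d, p⟫ + b * ⟪d, q⟫ := by
    intro d
    have := congrArg (fun z => ⟪d, z⟫) hm
    simpa [inner_add_right, real_inner_smul_right] using this
  rw [e m w₁, e m w₂, e p w₁, e p w₂, e q w₁, e q w₂]
  linear_combination (-2 : ℝ) * h' w₁ + (2 : ℝ) * h' w₂

/-- In a complete Hilbert space, points admitting a nearest point in a closed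
nonempty set are dense. -/
lemma exists_near_attained [CompleteSpace H] {S : Set H} (hne : S.Nonempty)
    (hcl : IsClosed S) (u : H) {ε : ℝ} (hε : 0 < ε) :
    ∃ v p, ‖v - u‖ ≤ ε ∧ p ∈ S ∧ ∀ w ∈ S, ‖p - v‖ ≤ ‖w - v‖ := by
  obtain ⟨q, hq⟩ := hne
  obtain ⟨c, hc0, hcM1, hcMε⟩ : ∃ c : ℝ, 0 < c ∧ c * (‖q - u‖ + 2) ≤ 1 ∧
      c * (‖q - u‖ + 2) ≤ ε := by
    have hM2 : (0:ℝ) < ‖q - u‖ + 2 := by positivity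
    refine ⟨min (1 / (‖q - u‖ + 2)) (ε / (‖q - u‖ + 2)),
      lt_min (by positivity) (by positivity), ?_, ?_⟩
    · calc _ ≤ (1 / (‖q - u‖ + 2)) * (‖q - u‖ + 2) :=
            mul_le_mul_of_nonneg_right (min_le_left _ _) hM2.le
      _ = 1 := by field_simp
    · calc _ ≤ (ε / (‖q - u‖ + 2)) * (‖q - u‖ + 2) :=
            mul_le_mul_of_nonneg_right (min_le_right _ _) hM2.le
      _ = ε := by field_simp
  have hM₀0 : (0:ℝ) ≤ ‖q - u‖ := norm_nonneg _
  have hc1 : c ≤ 1 := by nlinarith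
  set δ : ℕ → ℝ := fun n => c * (1 / 8) ^ (n + 1) with hδdef
  set wt : ℕ → ℝ := fun n => c * (1 / 2) ^ (n + 1) with hwtdef
  set α : ℕ → ℝ := fun n => 1 + c * (1 - (1 / 2) ^ n) with hαdef
  have hδ0 : ∀ n, 0 < δ n := fun n => by positivity
  have hδ1 : ∀ n, δ n ≤ 1 := by
    intro n
    show c * (1 / 8) ^ (n + 1) ≤ 1
    have h8 : ((1:ℝ) / 8) ^ (n + 1) ≤ 1 := pow_le_one₀ (by norm_num) (by norm_num)
    nlinarith [pow_pos (show (0:ℝ) < 1/8 by norm_num) (n + 1)]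
  have hwt0 : ∀ n, 0 < wt n := fun n => by positivity
  have hα1 : ∀ n, 1 ≤ α n := by
    intro n
    show (1:ℝ) ≤ 1 + c * (1 - (1 / 2) ^ n)
    have : ((1:ℝ) / 2) ^ n ≤ 1 := pow_le_one₀ (by norm_num) (by norm_num)
    nlinarith
  have hα2 : ∀ n, α n ≤ 2 := by
    intro n
    show (1:ℝ) + c * (1 - (1 / 2) ^ n) ≤ 2
    have h1 : (0:ℝ) ≤ (1 / 2) ^ n := by positivity
    nlinarith
  have hα0 : ∀ n, (0:ℝ) < α n := fun n => lt_of_lt_of_le one_pos (hα1 n)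
  have hαs : ∀ n, α (n + 1) = α n + wt n := by
    intro n
    show (1:ℝ) + c * (1 - (1 / 2) ^ (n + 1)) = 1 + c * (1 - (1 / 2) ^ n) + c * (1 / 2) ^ (n + 1)
    rw [pow_succ]; ring
  -- approximate nearest point choice
  have hchoice : ∀ (n : ℕ) (v : H), ∃ p, p ∈ S ∧
      ∀ w ∈ S, ‖p - v‖ ^ 2 ≤ ‖w - v‖ ^ 2 + δ n := by
    intro n v
    set A : Set ℝ := (fun w => ‖w - v‖ ^ 2) '' S with hA
    have hAne : A.Nonempty := ⟨_, ⟨q, hq, rfl⟩⟩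
    have hAbd : BddBelow A := ⟨0, by rintro _ ⟨w, _, rfl⟩; positivity⟩
    obtain ⟨b, ⟨p, hp, hbp⟩, hlt⟩ := exists_lt_of_csInf_lt hAne
      (show sInf A < sInf A + δ n by linarith [hδ0 n])
    refine ⟨p, hp, fun w hw => ?_⟩
    have h1 : sInf A ≤ ‖w - v‖ ^ 2 := csInf_le hAbd ⟨w, hw, rfl⟩
    have h2 : ‖p - v‖ ^ 2 = b := hbp
    linarith
  set P : ℕ → H → H := fun n v => (hchoice n v).choose with hP
  set v : ℕ → H := fun n => Nat.rec u
    (fun n vn => (α n / α (n + 1)) • vn + (wt n / α (n + 1)) • P n vn) n with hv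
  set p : ℕ → H := fun n => P n (v n) with hp
  have hv0 : v 0 = u := rfl
  have hvs : ∀ n, v (n + 1) = (α n / α (n + 1)) • v n + (wt n / α (n + 1)) • p n :=
    fun n => rfl
  have hps : ∀ n, p n ∈ S ∧ ∀ w' ∈ S, ‖p n - v n‖ ^ 2 ≤ ‖w' - v n‖ ^ 2 + δ n :=
    fun n => (hchoice n (v n)).choose_spec
  -- combination identity
  have hmix : ∀ n, (α n + wt n) • v (n + 1) = α n • v n + wt n • p n := by
    intro n
    rw [← hαs n, hvs n, smul_add, smul_smul, smul_smul,
      mul_div_cancel₀ _ (hα0 (n + 1)).ne', mul_div_cancel₀ _ (hα0 (n + 1)).ne']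
  clear_value P v p
  clear hP hv hp hchoice
  -- Cauchy estimate for p
  have hΔ : ∀ n, ‖p (n + 1) - p n‖ ≤ (1 / 2) ^ n := by
    intro n
    have hid := quad_diff (α n) (wt n) (v (n + 1)) (v n) (p n) (p (n + 1)) (p n) (hmix n)
    have hi := (hps n).2 (p (n + 1)) (hps (n + 1)).1
    have hii := (hps (n + 1)).2 (p n) (hps n).1
    rw [← hαs n] at hid
    have e0 : ‖p n - p n‖ ^ 2 = 0 := by simp
    have hi' : α n * ‖p n - v n‖ ^ 2 ≤ α n * ‖p (n + 1) - v n‖ ^ 2 + α n * δ n := by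
      nlinarith [hα0 n]
    have hii' : α (n + 1) * ‖p (n + 1) - v (n + 1)‖ ^ 2 ≤
        α (n + 1) * ‖p n - v (n + 1)‖ ^ 2 + α (n + 1) * δ (n + 1) := by
      nlinarith [hα0 (n + 1)]
    rw [e0, mul_zero, add_zero] at hid
    have h1 : wt n * ‖p (n + 1) - p n‖ ^ 2 ≤ α n * δ n + α (n + 1) * δ (n + 1) := by
      linarith
    have h2 : α n * δ n + α (n + 1) * δ (n + 1) ≤ 2 * δ n + 2 * δ (n + 1) := by
      nlinarith [hα2 n, hα2 (n + 1), hδ0 n, hδ0 (n + 1)]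
    have h3 : 2 * δ n + 2 * δ (n + 1) ≤ wt n * ((1 / 2) ^ n) ^ 2 := by
      have hcube : ((1:ℝ)/2) ^ n * (((1:ℝ)/2) ^ n * ((1:ℝ)/2) ^ n) = ((1:ℝ)/8) ^ n := by
        rw [← mul_pow, ← mul_pow]; norm_num
      have h8 : (0:ℝ) < ((1:ℝ)/8) ^ n := by positivity
      have e1 : δ n = c * (1/8) ^ n * (1/8) := by
        show c * (1/8) ^ (n+1) = _; rw [pow_succ]; ring
      have e2 : δ (n+1) = c * (1/8) ^ n * (1/64) := by
        show c * (1/8) ^ (n+1+1) = _; rw [pow_succ, pow_succ]; ring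
      have e3 : wt n * ((1/2) ^ n) ^ 2 = c * (1/8) ^ n * (1/2) := by
        show (c * (1/2) ^ (n+1)) * _ = _
        rw [pow_succ, ← hcube]; ring
      rw [e1, e2, e3]
      nlinarith [mul_pos hc0 h8]
    have h5 : ‖p (n + 1) - p n‖ ^ 2 ≤ ((1 / 2) ^ n) ^ 2 := by
      have hw := hwt0 n
      have := h1.trans (h2.trans h3)
      exact le_of_mul_le_mul_left this hw
    exact le_of_pow_le_pow_left₀ two_ne_zero (by positivity) h5
  -- boundedness of the v sequence
  have hpv : ∀ n, ‖v n - u‖ ≤ 1 → ‖p n - v n‖ ≤ ‖q - u‖ + 2 := by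
    intro n hn
    have h1 := (hps n).2 q hq
    have h2 : ‖q - v n‖ ≤ ‖q - u‖ + 1 := by
      calc ‖q - v n‖ = ‖(q - u) + (u - v n)‖ := by rw [sub_add_sub_cancel]
      _ ≤ ‖q - u‖ + ‖u - v n‖ := norm_add_le _ _
      _ ≤ ‖q - u‖ + 1 := by
            have e : ‖u - v n‖ = ‖v n - u‖ := norm_sub_rev _ _
            rw [e]; linarith
    have h3 : ‖p n - v n‖ ^ 2 ≤ (‖q - u‖ + 2) ^ 2 := by
      nlinarith [hδ1 n, norm_nonneg (q - v n), hM₀0]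
    exact le_of_pow_le_pow_left₀ two_ne_zero (by positivity) h3
  have hvinc : ∀ n, v (n + 1) - v n = (wt n / α (n + 1)) • (p n - v n) := by
    intro n
    have hcoef : α n / α (n + 1) = 1 - wt n / α (n + 1) := by
      rw [eq_sub_iff_add_eq, ← add_div, ← hαs n, div_self (hα0 (n + 1)).ne']
    rw [hvs n, hcoef, sub_smul, one_smul, smul_sub]
    abel
  have hvb : ∀ n, ‖v n - u‖ ≤ c * (‖q - u‖ + 2) * (1 - (1 / 2) ^ n) := by
    intro n
    induction n with
    | zero => simp [hv0]
    | succ n ih =>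
      have hhalf : (0:ℝ) ≤ (1/2) ^ n := by positivity
      have hhalf1 : ((1:ℝ)/2) ^ n ≤ 1 := pow_le_one₀ (by norm_num) (by norm_num)
      have hb1 : ‖v n - u‖ ≤ 1 := by nlinarith
      have hinc : ‖v (n + 1) - v n‖ ≤ wt n * (‖q - u‖ + 2) := by
        rw [hvinc n, norm_smul, Real.norm_eq_abs,
          abs_of_nonneg (div_nonneg (hwt0 n).le (hα0 (n + 1)).le)]
        have h1 : wt n / α (n + 1) ≤ wt n := by
          rw [div_le_iff₀ (hα0 (n + 1))]
          nlinarith [hα1 (n + 1), hwt0 n]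
        have := hpv n hb1
        nlinarith [hwt0 n, norm_nonneg (p n - v n),
          div_nonneg (hwt0 n).le (hα0 (n + 1)).le]
      have htri : ‖v (n + 1) - u‖ ≤ ‖v (n + 1) - v n‖ + ‖v n - u‖ := by
        calc ‖v (n + 1) - u‖ = ‖(v (n + 1) - v n) + (v n - u)‖ := by
              rw [sub_add_sub_cancel]
        _ ≤ _ := norm_add_le _ _
      have hwte : wt n = c * (1/2) ^ (n + 1) := rfl
      rw [pow_succ] at hwte ⊢
      nlinarith [htri, hinc, ih]
  -- limits
  have hcp : CauchySeq p := by
    apply cauchySeq_of_le_geometric (1/2 : ℝ) 1 (by norm_num)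
    intro n
    rw [dist_eq_norm, norm_sub_rev, one_mul]
    exact hΔ n
  have hcv : CauchySeq v := by
    apply cauchySeq_of_le_geometric (1/2 : ℝ) (c * (‖q - u‖ + 2) / 2) (by norm_num)
    intro n
    rw [dist_eq_norm, norm_sub_rev]
    have hinc : ‖v (n + 1) - v n‖ ≤ wt n * (‖q - u‖ + 2) := by
      rw [hvinc n, norm_smul, Real.norm_eq_abs,
        abs_of_nonneg (div_nonneg (hwt0 n).le (hα0 (n + 1)).le)]
      have hb1 : ‖v n - u‖ ≤ 1 := by
        have := hvb n
        have hhalf : (0:ℝ) ≤ (1/2) ^ n := by positivity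
        have hhalf1 : ((1:ℝ)/2) ^ n ≤ 1 := pow_le_one₀ (by norm_num) (by norm_num)
        nlinarith
      have h1 : wt n / α (n + 1) ≤ wt n := by
        rw [div_le_iff₀ (hα0 (n + 1))]
        nlinarith [hα1 (n + 1), hwt0 n]
      have := hpv n hb1
      nlinarith [hwt0 n, norm_nonneg (p n - v n),
        div_nonneg (hwt0 n).le (hα0 (n + 1)).le]
    calc ‖v (n + 1) - v n‖ ≤ wt n * (‖q - u‖ + 2) := hinc
    _ = c * (‖q - u‖ + 2) / 2 * (1/2) ^ n := by
        show c * (1/2) ^ (n + 1) * (‖q - u‖ + 2) = _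
        rw [pow_succ]; ring
  obtain ⟨pbar, hpbar⟩ := cauchySeq_tendsto_of_complete hcp
  obtain ⟨vbar, hvbar⟩ := cauchySeq_tendsto_of_complete hcv
  have hpS : pbar ∈ S := hcl.mem_of_tendsto hpbar
    (Filter.Eventually.of_forall fun n => (hps n).1)
  have hvu : ‖vbar - u‖ ≤ ε := by
    have h0 : dist (v 0) vbar ≤ (c * (‖q - u‖ + 2) / 2) / (1 - 1/2) := by
      apply dist_le_of_le_geometric_of_tendsto₀ (1/2 : ℝ) _ (by norm_num) _ hvbar
      intro n
      rw [dist_eq_norm, norm_sub_rev]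
      have hinc : ‖v (n + 1) - v n‖ ≤ wt n * (‖q - u‖ + 2) := by
        rw [hvinc n, norm_smul, Real.norm_eq_abs,
          abs_of_nonneg (div_nonneg (hwt0 n).le (hα0 (n + 1)).le)]
        have hb1 : ‖v n - u‖ ≤ 1 := by
          have := hvb n
          have hhalf : (0:ℝ) ≤ (1/2) ^ n := by positivity
          have hhalf1 : ((1:ℝ)/2) ^ n ≤ 1 := pow_le_one₀ (by norm_num) (by norm_num)
          nlinarith
        have h1 : wt n / α (n + 1) ≤ wt n := by
          rw [div_le_iff₀ (hα0 (n + 1))]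
          nlinarith [hα1 (n + 1), hwt0 n]
        have := hpv n hb1
        nlinarith [hwt0 n, norm_nonneg (p n - v n),
          div_nonneg (hwt0 n).le (hα0 (n + 1)).le]
      calc ‖v (n + 1) - v n‖ ≤ wt n * (‖q - u‖ + 2) := hinc
      _ = c * (‖q - u‖ + 2) / 2 * (1/2) ^ n := by
          show c * (1/2) ^ (n + 1) * (‖q - u‖ + 2) = _
          rw [pow_succ]; ring
    rw [hv0, dist_eq_norm, norm_sub_rev] at h0
    calc ‖vbar - u‖ ≤ (c * (‖q - u‖ + 2) / 2) / (1 - 1/2) := h0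
    _ = c * (‖q - u‖ + 2) := by ring
    _ ≤ ε := hcMε
  refine ⟨vbar, pbar, hvu, hpS, fun w hw => ?_⟩
  have hsq : ∀ n, ‖p n - v n‖ ^ 2 ≤ ‖w - v n‖ ^ 2 + δ n := fun n => (hps n).2 w hw
  have t1 : Tendsto (fun n => ‖p n - v n‖ ^ 2) atTop (𝓝 (‖pbar - vbar‖ ^ 2)) :=
    ((hpbar.sub hvbar).norm).pow 2
  have tδ : Tendsto δ atTop (𝓝 0) := by
    have h8 : Tendsto (fun n : ℕ => ((1:ℝ)/8) ^ n) atTop (𝓝 0) :=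
      tendsto_pow_atTop_nhds_zero_of_lt_one (by norm_num) (by norm_num)
    have := ((h8.comp (tendsto_add_atTop_nat 1)).const_mul c)
    rw [mul_zero] at this
    exact this
  have t2 : Tendsto (fun n => ‖w - v n‖ ^ 2 + δ n) atTop (𝓝 (‖w - vbar‖ ^ 2 + 0)) :=
    (((tendsto_const_nhds.sub hvbar).norm).pow 2).add tδ
  have hfin : ‖pbar - vbar‖ ^ 2 ≤ ‖w - vbar‖ ^ 2 + 0 :=
    le_of_tendsto_of_tendsto' t1 t2 hsq
  rw [add_zero] at hfin
  exact le_of_pow_le_pow_left₀ two_ne_zero (norm_nonneg _) hfin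

/-- Approximate midpoint property for prox-regular sets. -/
lemma approx_mid [CompleteSpace H] {S : Set H} (hne : S.Nonempty) (hcl : IsClosed S)
    {r : ℝ} (hr : 0 < r)
    (hkey : ∀ p ∈ S, ∀ ζ ∈ ProxNormalCone S p, ∀ w ∈ S,
      ⟪ζ, w - p⟫ ≤ ‖ζ‖ / (2 * r) * ‖w - p‖ ^ 2)
    {x y : H} (hx : x ∈ S) (hy : y ∈ S) (hxy : ‖x - y‖ ≤ r / 2) :
    ∃ z ∈ S, ‖z - x‖ ≤ 3 / 5 * ‖x - y‖ ∧ ‖z - y‖ ≤ 3 / 5 * ‖x - y‖ := by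
  by_cases hd : ‖x - y‖ = 0
  · have hxyeq : x = y := by rwa [norm_sub_eq_zero_iff] at hd
    exact ⟨x, hx, by simp, by rw [← hxyeq]; simp⟩
  set δ : ℝ := ‖x - y‖ with hδdef
  have hδ0 : 0 < δ := lt_of_le_of_ne (norm_nonneg _) (Ne.symm hd)
  set m : H := (1/2 : ℝ) • (x + y) with hm
  have hxm : ‖x - m‖ = δ / 2 := by
    have e : x - m = (1/2 : ℝ) • (x - y) := by
      rw [hm]; module
    rw [e, norm_smul]
    simp [hδdef]
    ring
  have hym : ‖y - m‖ = δ / 2 := by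
    have e : y - m = (1/2 : ℝ) • (y - x) := by
      rw [hm]; module
    rw [e, norm_smul]
    simp [hδdef, norm_sub_rev x y]
    ring
  obtain ⟨v, p, hvm, hpS, hmin⟩ := exists_near_attained hne hcl m
    (ε := δ / 100) (by positivity)
  -- the proximal normal
  have hζ : (v - p) ∈ ProxNormalCone S p := by
    refine ⟨1/2, by norm_num, 1, one_pos, fun w hw _ => ?_⟩
    have h2 : ‖p - v‖ ^ 2 ≤ ‖w - v‖ ^ 2 :=
      pow_le_pow_left₀ (norm_nonneg _) (hmin w hw) 2
    have e : w - v = (w - p) - (v - p) := by abel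
    have hexp : ‖(w - p) - (v - p)‖ ^ 2
        = ‖w - p‖ ^ 2 - 2 * ⟪w - p, v - p⟫ + ‖v - p‖ ^ 2 := norm_sub_sq_real _ _
    rw [e, hexp] at h2
    have hc : ⟪v - p, w - p⟫ = ⟪w - p, v - p⟫ := real_inner_comm _ _
    have hvp2 : ‖v - p‖ ^ 2 = ‖p - v‖ ^ 2 := by rw [norm_sub_rev]
    linarith [h2]
  have hvp : ‖v - p‖ = ‖p - v‖ := norm_sub_rev _ _
  have hvm' : ‖v - m‖ ≤ δ / 100 := hvm
  -- distance estimates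
  have hgen : ∀ w, w ∈ S → ‖w - m‖ = δ / 2 → ‖w - p‖ ≤ 3 / 5 * δ := by
    intro w hw hwm
    have hwv : ‖w - v‖ ≤ 51 / 100 * δ := by
      calc ‖w - v‖ = ‖(w - m) + (m - v)‖ := by rw [sub_add_sub_cancel]
      _ ≤ ‖w - m‖ + ‖m - v‖ := norm_add_le _ _
      _ ≤ δ / 2 + δ / 100 := by
          rw [hwm, norm_sub_rev]; linarith
      _ = 51 / 100 * δ := by ring
    have ha : ‖p - v‖ ≤ ‖w - v‖ := hmin w hw
    have haδ : ‖p - v‖ ≤ 51 / 100 * δ := ha.trans hwv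
    have hprx := hkey p hpS (v - p) hζ w hw
    rw [hvp, div_mul_eq_mul_div, le_div_iff₀ (by positivity)] at hprx
    -- hprx : ⟪v - p, w - p⟫ * (2 * r) ≤ ‖p - v‖ * ‖w - p‖ ^ 2
    have hexp : ‖w - v‖ ^ 2 = ‖w - p‖ ^ 2 - 2 * ⟪w - p, v - p⟫ + ‖v - p‖ ^ 2 := by
      have e : w - v = (w - p) - (v - p) := by abel
      rw [e, norm_sub_sq_real]
    have hcomm : ⟪v - p, w - p⟫ = ⟪w - p, v - p⟫ := real_inner_comm _ _
    have hwv2 : ‖w - v‖ ^ 2 ≤ (51 / 100 * δ) ^ 2 :=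
      pow_le_pow_left₀ (norm_nonneg _) hwv 2
    have hδr : δ ≤ r / 2 := hxy
    have h6 : r * (‖w - p‖ ^ 2 - 2 * ⟪w - p, v - p⟫ + ‖p - v‖ ^ 2)
        ≤ r * (51 / 100 * δ) ^ 2 := by
      rw [hvp] at hexp
      nlinarith [hr.le]
    have hX2 : (r - ‖p - v‖) * ‖w - p‖ ^ 2 ≤ r * (51 / 100 * δ) ^ 2 := by
      nlinarith [hprx, hcomm, sq_nonneg (‖p - v‖), mul_pos hr hr]
    have hra : (149 : ℝ) / 200 * r ≤ r - ‖p - v‖ := by linarith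
    have h7 : (149 / 200) * r * ‖w - p‖ ^ 2 ≤ r * ((2601 / 10000) * δ ^ 2) := by
      nlinarith [hX2, mul_nonneg (show (0:ℝ) ≤ r - ‖p - v‖ - 149/200 * r by linarith)
        (sq_nonneg ‖w - p‖)]
    have hX9 : ‖w - p‖ ^ 2 ≤ (3 / 5 * δ) ^ 2 := by
      nlinarith [h7, hr, sq_nonneg δ]
    exact le_of_pow_le_pow_left₀ two_ne_zero (by positivity) hX9
  have h1 := hgen x hx hxm
  have h2 := hgen y hy hym
  refine ⟨p, hpS, ?_, ?_⟩
  · have e : ‖p - x‖ = ‖x - p‖ := norm_sub_rev _ _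
    rw [e]; exact h1
  · have e : ‖p - y‖ = ‖y - p‖ := norm_sub_rev _ _
    rw [e]; exact h2

/-- From an approximate-midpoint property, closeness implies joinedness. -/
lemma joined_of_close [CompleteSpace H] {S : Set H} (hcl : IsClosed S) {r : ℝ}
    (hr : 0 < r)
    (hM : ∀ x ∈ S, ∀ y ∈ S, ‖x - y‖ ≤ r →
      ∃ z ∈ S, ‖z - x‖ ≤ 3 / 5 * ‖x - y‖ ∧ ‖z - y‖ ≤ 3 / 5 * ‖x - y‖)
    {x y : H} (hx : x ∈ S) (hy : y ∈ S) (hxy : ‖x - y‖ ≤ r) :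
    JoinedIn S x y := by
  classical
  set δ : ℝ := ‖x - y‖ with hδdef
  have hδ0 : 0 ≤ δ := norm_nonneg _
  -- midpoint chooser
  set mid : H → H → H := fun a b =>
    if h : a ∈ S ∧ b ∈ S ∧ ‖a - b‖ ≤ r then (hM a h.1 b h.2.1 h.2.2).choose else x
    with hmiddef
  have mid_spec : ∀ a b, a ∈ S → b ∈ S → ‖a - b‖ ≤ r →
      mid a b ∈ S ∧ ‖mid a b - a‖ ≤ 3 / 5 * ‖a - b‖ ∧
        ‖mid a b - b‖ ≤ 3 / 5 * ‖a - b‖ := by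
    intro a b ha hb hab
    have h : a ∈ S ∧ b ∈ S ∧ ‖a - b‖ ≤ r := ⟨ha, hb, hab⟩
    rw [hmiddef]
    simp only [dif_pos h]
    obtain ⟨h1, h2, h3⟩ := (hM a h.1 b h.2.1 h.2.2).choose_spec
    exact ⟨h1, h2, h3⟩
  -- dyadic scheme
  set z : ℕ → ℕ → H := fun n => Nat.rec (fun k => if k = 0 then x else y)
    (fun _ zn k => if Even k then zn (k / 2) else mid (zn (k / 2)) (zn (k / 2 + 1))) n
    with hzdef
  have hz0 : ∀ k, z 0 k = if k = 0 then x else y := fun k => rfl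
  have hzs : ∀ n k, z (n + 1) k =
      if Even k then z n (k / 2) else mid (z n (k / 2)) (z n (k / 2 + 1)) :=
    fun n k => rfl
  clear_value mid z
  have hinv : ∀ n, (z n 0 = x) ∧ (∀ k, 2 ^ n ≤ k → z n k = y) ∧
      (∀ k, z n k ∈ S) ∧ (∀ k, ‖z n (k + 1) - z n k‖ ≤ (3 / 5) ^ n * δ) := by
    intro n
    induction n with
    | zero =>
      refine ⟨by rw [hz0]; simp, fun k hk => by rw [hz0]; simp; omega, ?_, ?_⟩
      · intro k
        rw [hz0]
        by_cases h : k = 0 <;> simp [h, hx, hy]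
      · intro k
        rw [hz0, hz0]
        by_cases h : k = 0
        · subst h; simp [norm_sub_rev x y, hδdef]
        · simp [h]; exact hδ0
    | succ n ih =>
      obtain ⟨ih0, ihy, ihS, ihd⟩ := ih
      have hpow1 : ((3:ℝ) / 5) ^ n ≤ 1 := pow_le_one₀ (by norm_num) (by norm_num)
      have hpow0 : (0:ℝ) ≤ (3 / 5) ^ n := by positivity
      have hadj : ∀ k, ‖z n k - z n (k + 1)‖ ≤ r := by
        intro k
        rw [norm_sub_rev]
        calc ‖z n (k + 1) - z n k‖ ≤ (3 / 5) ^ n * δ := ihd k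
        _ ≤ 1 * δ := by nlinarith
        _ ≤ r := by rw [one_mul]; exact hxy
      have hmidS : ∀ k, mid (z n k) (z n (k + 1)) ∈ S ∧
          ‖mid (z n k) (z n (k + 1)) - z n k‖ ≤ 3 / 5 * ((3 / 5) ^ n * δ) ∧
          ‖mid (z n k) (z n (k + 1)) - z n (k + 1)‖ ≤ 3 / 5 * ((3 / 5) ^ n * δ) := by
        intro k
        obtain ⟨h1, h2, h3⟩ := mid_spec (z n k) (z n (k + 1)) (ihS k) (ihS (k + 1))
          (hadj k)
        have hd : ‖z n k - z n (k + 1)‖ ≤ (3 / 5) ^ n * δ := by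
          rw [norm_sub_rev]; exact ihd k
        refine ⟨h1, ?_, ?_⟩ <;> nlinarith
      refine ⟨?_, ?_, ?_, ?_⟩
      · rw [hzs]
        simp only [if_pos (by exact ⟨0, rfl⟩ : Even (0:ℕ))]
        simpa using ih0
      · intro k hk
        rw [hzs]
        by_cases h : Even k
        · rw [if_pos h]
          exact ihy _ (by omega)
        · rw [if_neg h]
          have h1 : 2 ^ n ≤ k / 2 := by
            rcases Nat.odd_iff.mp (Nat.not_even_iff_odd.mp h) with _
            omega
          have e1 : z n (k / 2) = y := ihy _ h1
          have e2 : z n (k / 2 + 1) = y := ihy _ (by omega)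
          rw [e1, e2]
          obtain ⟨m1, m2, _⟩ := mid_spec y y hy hy (by simp; positivity)
          have : ‖mid y y - y‖ ≤ 0 := by simpa using m2
          have := le_antisymm this (norm_nonneg _)
          rwa [norm_sub_eq_zero_iff] at this
      · intro k
        rw [hzs]
        by_cases h : Even k
        · rw [if_pos h]; exact ihS _
        · rw [if_neg h]; exact (hmidS _).1
      · intro k
        rcases Nat.even_or_odd k with h | h
        · obtain ⟨j, hj⟩ := h
          have hk : k = 2 * j := by omega
          subst hk
          have e1 : z (n + 1) (2 * j) = z n j := by
            rw [hzs, if_pos ⟨j, by omega⟩]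
            congr 1
            omega
          have e2 : z (n + 1) (2 * j + 1) = mid (z n j) (z n (j + 1)) := by
            rw [hzs, if_neg (by simp [Nat.even_add_one, Nat.not_even_iff_odd])]
            congr 2 <;> omega
          rw [e1, e2, pow_succ]
          have := (hmidS j).2.1
          calc ‖mid (z n j) (z n (j + 1)) - z n j‖ ≤ 3 / 5 * ((3 / 5) ^ n * δ) := this
          _ = (3 / 5) ^ n * (3 / 5) * δ := by ring
        · obtain ⟨j, hj⟩ := h
          subst hj
          have e1 : z (n + 1) (2 * j + 1) = mid (z n j) (z n (j + 1)) := by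
            rw [hzs, if_neg (by simp [Nat.even_add_one, Nat.not_even_iff_odd])]
            congr 2 <;> omega
          have e2 : z (n + 1) (2 * j + 1 + 1) = z n (j + 1) := by
            rw [hzs, if_pos ⟨j + 1, by omega⟩]
            congr 1
            omega
          rw [e1, e2, pow_succ]
          have h3 := (hmidS j).2.2
          rw [norm_sub_rev]
          calc ‖mid (z n j) (z n (j + 1)) - z n (j + 1)‖ ≤ 3 / 5 * ((3 / 5) ^ n * δ) := h3
          _ = (3 / 5) ^ n * (3 / 5) * δ := by ring
  -- step functions
  set f : ℕ → ℝ → H := fun n t => z n ⌊(2:ℝ) ^ n * t⌋₊ with hfdef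
  have hfstep : ∀ n (t : ℝ), ‖f (n + 1) t - f n t‖ ≤ (3 / 5) ^ (n + 1) * δ := by
    intro n t
    obtain ⟨_, _, ihS, ihd⟩ := hinv n
    have hpow1 : ((3:ℝ) / 5) ^ n ≤ 1 := pow_le_one₀ (by norm_num) (by norm_num)
    have hk2 : ⌊(2:ℝ) ^ n * t⌋₊ = ⌊(2:ℝ) ^ (n + 1) * t⌋₊ / 2 := by
      have e : (2:ℝ) ^ n * t = ((2:ℝ) ^ (n + 1) * t) / 2 := by ring
      rw [e]
      exact_mod_cast Nat.floor_div_natCast ((2:ℝ) ^ (n + 1) * t) 2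
    set k := ⌊(2:ℝ) ^ (n + 1) * t⌋₊ with hkdef
    show ‖z (n + 1) k - z n ⌊(2:ℝ) ^ n * t⌋₊‖ ≤ _
    rw [hk2]
    rcases Nat.even_or_odd k with h | h
    · rw [hzs, if_pos h]
      simp
      positivity
    · obtain ⟨j, hj⟩ := h
      rw [hj, hzs, if_neg (by simp [Nat.even_add_one, Nat.not_even_iff_odd])]
      have e1 : (2 * j + 1) / 2 = j := by omega
      rw [e1]
      have hadj : ‖z n j - z n (j + 1)‖ ≤ r := by
        rw [norm_sub_rev]
        calc ‖z n (j + 1) - z n j‖ ≤ (3 / 5) ^ n * δ := ihd j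
        _ ≤ 1 * δ := by nlinarith
        _ ≤ r := by rw [one_mul]; exact hxy
      obtain ⟨_, h2, _⟩ := mid_spec (z n j) (z n (j + 1)) (ihS j) (ihS (j + 1)) hadj
      have hd : ‖z n j - z n (j + 1)‖ ≤ (3 / 5) ^ n * δ := by
        rw [norm_sub_rev]; exact ihd j
      rw [pow_succ]
      nlinarith [norm_nonneg (mid (z n j) (z n (j + 1)) - z n j)]
  have hcauchy : ∀ t : ℝ, CauchySeq (fun n => f n t) := by
    intro t
    apply cauchySeq_of_le_geometric (3/5 : ℝ) (3 / 5 * δ) (by norm_num)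
    intro n
    rw [dist_eq_norm, norm_sub_rev]
    calc ‖f (n + 1) t - f n t‖ ≤ (3 / 5) ^ (n + 1) * δ := hfstep n t
    _ = 3 / 5 * δ * (3 / 5) ^ n := by rw [pow_succ]; ring
  have hγ : ∀ t : ℝ, ∃ a, Tendsto (fun n => f n t) atTop (𝓝 a) :=
    fun t => cauchySeq_tendsto_of_complete (hcauchy t)
  set γ : ℝ → H := fun t => (hγ t).choose with hγdef
  have hγt : ∀ t, Tendsto (fun n => f n t) atTop (𝓝 (γ t)) := fun t => (hγ t).choose_spec
  have htail : ∀ (t : ℝ) n, dist (f n t) (γ t) ≤ 3 / 2 * ((3 / 5) ^ n * δ) := by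
    intro t n
    have h := dist_le_of_le_geometric_of_tendsto (3/5 : ℝ) (3 / 5 * δ) (by norm_num)
      (fun n => by
        rw [dist_eq_norm, norm_sub_rev]
        calc ‖f (n + 1) t - f n t‖ ≤ (3 / 5) ^ (n + 1) * δ := hfstep n t
        _ = 3 / 5 * δ * (3 / 5) ^ n := by rw [pow_succ]; ring) (hγt t) n
    calc dist (f n t) (γ t) ≤ 3 / 5 * δ * (3 / 5) ^ n / (1 - 3 / 5) := h
    _ = 3 / 2 * ((3 / 5) ^ n * δ) := by ring
  have hγS : ∀ t, γ t ∈ S := fun t =>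
    hcl.mem_of_tendsto (hγt t) (Filter.Eventually.of_forall fun n => (hinv n).2.2.1 _)
  have hγ0 : γ 0 = x := by
    have hf0 : ∀ n, f n 0 = x := by
      intro n
      show z n ⌊(2:ℝ) ^ n * 0⌋₊ = x
      rw [mul_zero, Nat.floor_zero]
      exact (hinv n).1
    have : Tendsto (fun n => f n 0) atTop (𝓝 x) := by
      simp only [hf0]
      exact tendsto_const_nhds
    exact tendsto_nhds_unique (hγt 0) this
  have hγ1 : γ 1 = y := by
    have hf1 : ∀ n, f n 1 = y := by
      intro n
      show z n ⌊(2:ℝ) ^ n * 1⌋₊ = y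
      have e : (2:ℝ) ^ n * 1 = ((2 ^ n : ℕ) : ℝ) := by push_cast; ring
      rw [e, Nat.floor_natCast]
      exact (hinv n).2.1 _ le_rfl
    have : Tendsto (fun n => f n 1) atTop (𝓝 y) := by
      simp only [hf1]
      exact tendsto_const_nhds
    exact tendsto_nhds_unique (hγt 1) this
  -- grid bound
  have hgrid : ∀ n j m : ℕ, ‖z n (j + m) - z n j‖ ≤ m * ((3 / 5) ^ n * δ) := by
    intro n j m
    induction m with
    | zero => simp
    | succ m ih =>
      have h1 := (hinv n).2.2.2 (j + m)
      calc ‖z n (j + (m + 1)) - z n j‖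
          = ‖(z n (j + m + 1) - z n (j + m)) + (z n (j + m) - z n j)‖ := by
            rw [sub_add_sub_cancel, Nat.add_assoc]
      _ ≤ ‖z n (j + m + 1) - z n (j + m)‖ + ‖z n (j + m) - z n j‖ := norm_add_le _ _
      _ ≤ (3 / 5) ^ n * δ + m * ((3 / 5) ^ n * δ) := add_le_add h1 ih
      _ = (m + 1 : ℕ) * ((3 / 5) ^ n * δ) := by push_cast; ring
  have hfd : ∀ (n : ℕ) (s t : ℝ), 0 ≤ s → 0 ≤ t → t ≤ s →
      ‖f n s - f n t‖ ≤ ((2:ℝ) ^ n * (s - t) + 1) * ((3 / 5) ^ n * δ) := by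
    intro n s t hs ht hts
    set a := ⌊(2:ℝ) ^ n * s⌋₊ with hadef
    set b := ⌊(2:ℝ) ^ n * t⌋₊ with hbdef
    have hab : b ≤ a := Nat.floor_le_floor (by nlinarith [pow_pos (show (0:ℝ) < 2 by norm_num) n])
    have h1 : ‖f n s - f n t‖ ≤ ((a - b : ℕ) : ℝ) * ((3 / 5) ^ n * δ) := by
      have := hgrid n b (a - b)
      rwa [show b + (a - b) = a by omega] at this
    have h2 : ((a - b : ℕ) : ℝ) ≤ (2:ℝ) ^ n * (s - t) + 1 := by
      have hfa : (a : ℝ) ≤ (2:ℝ) ^ n * s :=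
        Nat.floor_le (by positivity)
      have hfb : (2:ℝ) ^ n * t < (b : ℝ) + 1 := Nat.lt_floor_add_one _
      have hcast : ((a - b : ℕ) : ℝ) = (a : ℝ) - (b : ℝ) := by
        push_cast [Nat.cast_sub hab]
        ring
      rw [hcast]
      nlinarith
    have h3 : (0:ℝ) ≤ (3 / 5) ^ n * δ := by positivity
    calc ‖f n s - f n t‖ ≤ ((a - b : ℕ) : ℝ) * ((3 / 5) ^ n * δ) := h1
    _ ≤ ((2:ℝ) ^ n * (s - t) + 1) * ((3 / 5) ^ n * δ) := by nlinarith
  -- continuity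
  have hcont : Continuous (fun t : unitInterval => γ (t : ℝ)) := by
    rw [Metric.continuous_iff]
    intro b ε hε
    have hT : Tendsto (fun n => (3/5 : ℝ) ^ n * δ) atTop (𝓝 0) := by
      have := (tendsto_pow_atTop_nhds_zero_of_lt_one
        (show (0:ℝ) ≤ 3/5 by norm_num) (by norm_num)).mul_const δ
      simpa using this
    have hev : ∀ᶠ n in atTop, (3/5 : ℝ) ^ n * δ < ε / 10 :=
      (hT.eventually (eventually_lt_nhds (by positivity : (0:ℝ) < ε / 10))).mono
        (fun n h => h)
    obtain ⟨n, hn⟩ := hev.exists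
    have hTn : (0:ℝ) ≤ (3/5) ^ n * δ := by positivity
    set D : ℝ := (2:ℝ) ^ n * ((3/5) ^ n * δ) + 1 with hD
    have hD0 : 0 < D := by positivity
    refine ⟨(ε / 2) / D, by positivity, fun a ha => ?_⟩
    have key : ∀ s t : unitInterval, (t : ℝ) ≤ (s : ℝ) → dist (s : ℝ) (t : ℝ) < (ε / 2) / D →
        dist (γ (s : ℝ)) (γ (t : ℝ)) < ε := by
      intro s t hts hdist
      have hs0 : (0:ℝ) ≤ (s : ℝ) := s.2.1
      have ht0 : (0:ℝ) ≤ (t : ℝ) := t.2.1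
      have h1 : dist (γ (s : ℝ)) (γ (t : ℝ)) ≤
          dist (γ (s : ℝ)) (f n s) + dist (f n s) (f n t) + dist (f n t) (γ (t : ℝ)) :=
        dist_triangle4 _ _ _ _
      have h2 : dist (γ (s : ℝ)) (f n s) ≤ 3 / 2 * ((3 / 5) ^ n * δ) := by
        rw [dist_comm]; exact htail _ n
      have h3 : dist (f n t) (γ (t : ℝ)) ≤ 3 / 2 * ((3 / 5) ^ n * δ) := htail _ n
      have h4 : dist (f n (s : ℝ)) (f n (t : ℝ)) ≤
          ((2:ℝ) ^ n * ((s : ℝ) - (t : ℝ)) + 1) * ((3 / 5) ^ n * δ) := by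
        rw [dist_eq_norm]
        exact hfd n _ _ hs0 ht0 hts
      have h5 : (s : ℝ) - (t : ℝ) < (ε / 2) / D := by
        rw [Real.dist_eq, abs_of_nonneg (by linarith)] at hdist
        exact hdist
      have h6 : ((2:ℝ) ^ n * ((s : ℝ) - (t : ℝ))) * ((3 / 5) ^ n * δ) ≤ ε / 2 := by
        have h2n : (0:ℝ) < (2:ℝ) ^ n := by positivity
        have hst : (0:ℝ) ≤ (s : ℝ) - (t : ℝ) := by linarith
        have : (2:ℝ) ^ n * ((s : ℝ) - (t : ℝ)) * ((3/5) ^ n * δ)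
            ≤ (2:ℝ) ^ n * ((ε / 2) / D) * ((3/5) ^ n * δ) :=
          mul_le_mul_of_nonneg_right (mul_le_mul_of_nonneg_left h5.le h2n.le) hTn
        calc (2:ℝ) ^ n * ((s : ℝ) - (t : ℝ)) * ((3/5) ^ n * δ)
            ≤ (2:ℝ) ^ n * ((ε / 2) / D) * ((3/5) ^ n * δ) := this
        _ = (ε / 2) * ((2:ℝ) ^ n * ((3/5) ^ n * δ)) / D := by ring
        _ ≤ (ε / 2) * D / D := by
            have hle : (2:ℝ) ^ n * ((3/5) ^ n * δ) ≤ D := by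
              rw [hD]; linarith
            have hε2 : (0:ℝ) ≤ ε / 2 := by positivity
            gcongr
        _ = ε / 2 := by rw [mul_div_assoc, div_self hD0.ne', mul_one]
      nlinarith [h1, h2, h3, h4, h6, hn, hTn]
    have ha' : dist ((a : unitInterval) : ℝ) ((b : unitInterval) : ℝ) < (ε / 2) / D := by
      rwa [Subtype.dist_eq] at ha
    rcases le_total ((b : unitInterval) : ℝ) ((a : unitInterval) : ℝ) with hba | hab'
    · exact key a b hba ha'
    · rw [dist_comm]
      exact key b a hab' (by rwa [dist_comm] at ha')
  refine ⟨⟨⟨fun t : unitInterval => γ (t : ℝ), hcont⟩, ?_, ?_⟩, fun t => hγS _⟩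
  · simpa using hγ0
  · simpa using hγ1


end ProxHelpers

/-- A nonempty closed `ρ`-uniformly prox-regular subset of a Hilbert space
is connected if and only if it is path-connected. -/
theorem proxRegular_isConnected_iff_isPathConnected
    {H : Type*} [NormedAddCommGroup H] [InnerProductSpace ℝ H] [CompleteSpace H]
    (ρ : ℝ≥0∞) (hρ : 0 < ρ) (S : Set H) (hSne : S.Nonempty) (hScl : IsClosed S)
    (hSpr : UniformlyProxRegular ρ S) :
    IsConnected S ↔ IsPathConnected S := by
  constructor
  · intro hconn
    set r : ℝ := (min ρ 1).toReal with hrdef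
    have hmin_ne_top : min ρ 1 ≠ ⊤ :=
      ne_top_of_le_ne_top (by simp) (min_le_right _ _)
    have hmin_ne_zero : min ρ 1 ≠ 0 := (lt_min hρ zero_lt_one).ne'
    have hr : 0 < r := ENNReal.toReal_pos hmin_ne_zero hmin_ne_top
    have hkey : ∀ p ∈ S, ∀ ζ ∈ ProxNormalCone S p, ∀ w ∈ S,
        ⟪ζ, w - p⟫ ≤ ‖ζ‖ / (2 * r) * ‖w - p‖ ^ 2 := by
      intro p hp ζ hζ w hw
      have h := hSpr p hp ζ hζ w hw
      refine h.trans ?_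
      have hw2 : (0:ℝ) ≤ ‖w - p‖ ^ 2 := by positivity
      by_cases htop : ρ = ⊤
      · have : ρ.toReal = 0 := by simp [htop]
        rw [this]
        simp only [mul_zero, div_zero, zero_mul]
        positivity
      · have hle : r ≤ ρ.toReal := by
          rw [hrdef]
          exact (ENNReal.toReal_le_toReal hmin_ne_top htop).mpr (min_le_left _ _)
        have hρ0 : 0 < ρ.toReal := lt_of_lt_of_le hr hle
        have hdiv : ‖ζ‖ / (2 * ρ.toReal) ≤ ‖ζ‖ / (2 * r) :=
          div_le_div_of_nonneg_left (norm_nonneg _) (by linarith) (by linarith)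
        exact mul_le_mul_of_nonneg_right hdiv hw2
    have hM : ∀ x ∈ S, ∀ y ∈ S, ‖x - y‖ ≤ r / 2 →
        ∃ z ∈ S, ‖z - x‖ ≤ 3 / 5 * ‖x - y‖ ∧ ‖z - y‖ ≤ 3 / 5 * ‖x - y‖ :=
      fun x hx y hy h => approx_mid hSne hScl hr hkey hx hy h
    have hJ : ∀ x ∈ S, ∀ y ∈ S, ‖x - y‖ ≤ r / 2 → JoinedIn S x y :=
      fun x hx y hy h =>
        joined_of_close hScl (by positivity : (0:ℝ) < r / 2) hM hx hy h
    obtain ⟨x₀, hx₀⟩ := hSne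
    set T : Set H := {y | y ∈ S ∧ JoinedIn S x₀ y} with hTdef
    have hTsub : ∀ w ∈ S, ∀ y ∈ T, ‖w - y‖ < r / 2 → w ∈ T := by
      intro w hw y hyT hwy
      refine ⟨hw, hyT.2.trans (hJ y hyT.1 w hw ?_)⟩
      rw [norm_sub_rev] at hwy
      linarith
    set U : Set H := ⋃ y ∈ T, ball y (r / 2) with hUdef
    set V : Set H := ⋃ y ∈ S \ T, ball y (r / 2) with hVdef
    have hUopen : IsOpen U := isOpen_biUnion fun _ _ => isOpen_ball
    have hVopen : IsOpen V := isOpen_biUnion fun _ _ => isOpen_ball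
    have hmemU : ∀ w, w ∈ U → ∃ y ∈ T, dist w y < r / 2 := by
      intro w hwmem
      rw [hUdef] at hwmem
      simpa using hwmem
    have hmemV : ∀ w, w ∈ V → ∃ y ∈ S \ T, dist w y < r / 2 := by
      intro w hwmem
      rw [hVdef] at hwmem
      simpa using hwmem
    have hcover : S ⊆ U ∪ V := by
      intro s hs
      by_cases hsT : s ∈ T
      · exact Or.inl (mem_biUnion hsT (mem_ball_self (by positivity)))
      · exact Or.inr (mem_biUnion ⟨hs, hsT⟩ (mem_ball_self (by positivity)))
    have hx₀T : x₀ ∈ T := ⟨hx₀, JoinedIn.refl hx₀⟩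
    have hUne : (S ∩ U).Nonempty :=
      ⟨x₀, hx₀, mem_biUnion hx₀T (mem_ball_self (by positivity))⟩
    have hdisj : ¬(S ∩ (U ∩ V)).Nonempty := by
      rintro ⟨w, hwS, hwU, hwV⟩
      obtain ⟨y, hyT, hy⟩ := hmemU w hwU
      obtain ⟨y', hy'ST, hy'⟩ := hmemV w hwV
      have hwT : w ∈ T := hTsub w hwS y hyT (by rwa [← dist_eq_norm])
      have : y' ∈ T := hTsub y' hy'ST.1 w hwT
        (by rw [← dist_eq_norm, dist_comm]; exact hy')
      exact hy'ST.2 this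
    have hVemp : ¬(S ∩ V).Nonempty := by
      intro hVne
      exact hdisj (hconn.isPreconnected U V hUopen hVopen hcover hUne hVne)
    have hallT : ∀ y ∈ S, y ∈ T := by
      intro y hy
      by_contra hyT
      exact hVemp ⟨y, hy, mem_biUnion ⟨hy, hyT⟩ (mem_ball_self (by positivity))⟩
    exact ⟨x₀, hx₀, fun {y} hy => (hallT y hy).2⟩
  · exact fun h => h.isConnected
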